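/- Let ρ : ℝ → ℝ be Borel measurable, let a < b be real numbers and let T > 0. Then (1/T²) ∫_{[aT,bT]^4} |ρ(u−v)| · |ρ(w−z)| · |ρ(u−w)| · |ρ(z−v)| du dv dw dz ≤ ((b−a)/T) ∫_{ℝ³} |ρ(x)| · |ρ(y)| · |ρ(t)| · |ρ(x−y−t)| dx dy dt, where both sides are Lebesgue integrals with values in [0, ∞]. -/

import Mathlib

open MeasureTheory
open scoped ENNReal

lemma lintegral_sub_left_eq_self' (f : ℝ → ℝ≥0∞) (u : ℝ) :
    (∫⁻ x : ℝ, f (u - x)) = ∫⁻ x : ℝ, f x := by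
  have h := (lintegral_map_equiv f (MeasurableEquiv.subLeft u) (μ := volume)).symm
  have hc : ⇑(MeasurableEquiv.subLeft u) = fun t : ℝ => u - t := rfl
  rw [hc, MeasureTheory.Measure.map_sub_left_eq_self volume u] at h
  simpa using h

/-- The key deterministic estimate in the proof of Theorem 6.1:
`(1/T²) ∫_{[aT,bT]⁴} |ρ(u−v)||ρ(w−z)||ρ(u−w)||ρ(z−v)| du dv dw dz
  ≤ ((b−a)/T) ∫_{ℝ³} |ρ(x)||ρ(y)||ρ(t)||ρ(x−y−t)| dx dy dt`,
both sides being Lebesgue integrals with values in `[0,∞]`. -/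
theorem stmt15 (ρ : ℝ → ℝ) (hρ : Measurable ρ) (a b : ℝ) (hab : a < b) (T : ℝ) (hT : 0 < T) :
    ENNReal.ofReal (1 / T ^ 2) *
      ∫⁻ u in Set.Icc (a * T) (b * T), ∫⁻ v in Set.Icc (a * T) (b * T),
        ∫⁻ w in Set.Icc (a * T) (b * T), ∫⁻ z in Set.Icc (a * T) (b * T),
          ENNReal.ofReal (|ρ (u - v)| * |ρ (w - z)| * |ρ (u - w)| * |ρ (z - v)|) ≤
    ENNReal.ofReal ((b - a) / T) *
      ∫⁻ x : ℝ, ∫⁻ y : ℝ, ∫⁻ t : ℝ,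
        ENNReal.ofReal (|ρ x| * |ρ y| * |ρ t| * |ρ (x - y - t)|) := by
  set I := Set.Icc (a * T) (b * T) with hI
  set g : ℝ → ℝ → ℝ → ℝ≥0∞ :=
    fun x y t => ENNReal.ofReal (|ρ x| * |ρ y| * |ρ t| * |ρ (x - y - t)|) with hg
  set C := ∫⁻ x : ℝ, ∫⁻ y : ℝ, ∫⁻ t : ℝ, g x y t with hC
  -- pointwise identification of the integrand after the change of variables
  have hpt : ∀ u v w z : ℝ,
      ENNReal.ofReal (|ρ (u - v)| * |ρ (w - z)| * |ρ (u - w)| * |ρ (z - v)|)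
        = g (u - v) (u - w) (z - v) := by
    intro u v w z
    simp only [hg]
    congr 1
    have : (u - v) - (u - w) - (z - v) = w - z := by ring
    rw [this]
    ring
  -- step over z : shift z ↦ z - v
  have hz : ∀ u v w : ℝ,
      (∫⁻ z in I, g (u - v) (u - w) (z - v)) ≤ ∫⁻ t : ℝ, g (u - v) (u - w) t := by
    intro u v w
    refine le_trans (setLIntegral_le_lintegral _ _) (le_of_eq ?_)
    simpa using lintegral_sub_right_eq_self (fun t => g (u - v) (u - w) t) v
  -- step over w : reflection w ↦ u - w
  have hw : ∀ u v : ℝ,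
      (∫⁻ w in I, ∫⁻ t : ℝ, g (u - v) (u - w) t)
        ≤ ∫⁻ y : ℝ, ∫⁻ t : ℝ, g (u - v) y t := by
    intro u v
    refine le_trans (setLIntegral_le_lintegral _ _) (le_of_eq ?_)
    exact lintegral_sub_left_eq_self' (fun y => ∫⁻ t : ℝ, g (u - v) y t) u
  -- step over v : reflection v ↦ u - v
  have hv : ∀ u : ℝ,
      (∫⁻ v in I, ∫⁻ y : ℝ, ∫⁻ t : ℝ, g (u - v) y t) ≤ C := by
    intro u
    refine le_trans (setLIntegral_le_lintegral _ _) (le_of_eq ?_)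
    rw [hC]
    exact lintegral_sub_left_eq_self' (fun x => ∫⁻ y : ℝ, ∫⁻ t : ℝ, g x y t) u
  have key : ∀ u : ℝ,
      (∫⁻ v in I, ∫⁻ w in I, ∫⁻ z in I,
        ENNReal.ofReal (|ρ (u - v)| * |ρ (w - z)| * |ρ (u - w)| * |ρ (z - v)|)) ≤ C := by
    intro u
    calc (∫⁻ v in I, ∫⁻ w in I, ∫⁻ z in I,
          ENNReal.ofReal (|ρ (u - v)| * |ρ (w - z)| * |ρ (u - w)| * |ρ (z - v)|))
        = ∫⁻ v in I, ∫⁻ w in I, ∫⁻ z in I, g (u - v) (u - w) (z - v) := by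
          simp_rw [hpt]
      _ ≤ ∫⁻ v in I, ∫⁻ y : ℝ, ∫⁻ t : ℝ, g (u - v) y t := by
          refine lintegral_mono fun v => ?_
          exact le_trans (lintegral_mono fun w => hz u v w) (hw u v)
      _ ≤ C := hv u
  have hIvol : volume I = ENNReal.ofReal ((b - a) * T) := by
    rw [hI, Real.volume_Icc]
    congr 1
    ring
  have hmain : (∫⁻ u in I, ∫⁻ v in I, ∫⁻ w in I, ∫⁻ z in I,
      ENNReal.ofReal (|ρ (u - v)| * |ρ (w - z)| * |ρ (u - w)| * |ρ (z - v)|))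
      ≤ ENNReal.ofReal ((b - a) * T) * C := by
    calc (∫⁻ u in I, ∫⁻ v in I, ∫⁻ w in I, ∫⁻ z in I,
          ENNReal.ofReal (|ρ (u - v)| * |ρ (w - z)| * |ρ (u - w)| * |ρ (z - v)|))
        ≤ ∫⁻ _ in I, C := lintegral_mono fun u => key u
      _ = volume I * C := by rw [setLIntegral_const]; ring
      _ = ENNReal.ofReal ((b - a) * T) * C := by rw [hIvol]
  calc ENNReal.ofReal (1 / T ^ 2) *
        ∫⁻ u in I, ∫⁻ v in I, ∫⁻ w in I, ∫⁻ z in I,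
          ENNReal.ofReal (|ρ (u - v)| * |ρ (w - z)| * |ρ (u - w)| * |ρ (z - v)|)
      ≤ ENNReal.ofReal (1 / T ^ 2) * (ENNReal.ofReal ((b - a) * T) * C) :=
        mul_le_mul_right hmain _
    _ = ENNReal.ofReal ((b - a) / T) * C := by
        rw [← mul_assoc, ← ENNReal.ofReal_mul (by positivity)]
        congr 2
        field_simp
    _ = ENNReal.ofReal ((b - a) / T) *
        ∫⁻ x : ℝ, ∫⁻ y : ℝ, ∫⁻ t : ℝ,
          ENNReal.ofReal (|ρ x| * |ρ y| * |ρ t| * |ρ (x - y - t)|) := rfl
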